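/- Let M = ∑_{n≥0} m(n)·zⁿ ∈ ℚ⟦z⟧ be the ordinary generating function of peakless Motzkin paths, and let C ∈ ℚ⟦z⟧ be the unique power series with M = 1 + z·C (it exists since M has constant term 1). Then C satisfies the identity C·((1 − z)·(1 − z³·C) − z) = 1 − z − z³·C in ℚ⟦z⟧, which encodes the periodic continued fraction M = 1 + z/(1 − z/(1 − z/(1 − z³/(1 − z/(1 − z/(1 − z³/(1 − ···))))))). -/

import Mathlib

/-- Steps of a Motzkin path: up, down, flat. -/
inductive Step : Type
  | U : Step
  | D : Step
  | F : Step
  deriving DecidableEq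

instance : Fintype Step :=
  ⟨{Step.U, Step.D, Step.F}, fun x => by cases x <;> simp⟩

/-- The value (vertical displacement) of a step. -/
def Step.val : Step → ℤ
  | .U => 1
  | .D => -1
  | .F => 0

/-- The partial sum of the first `i` step values of the word `w`. -/
def psum {n : ℕ} (w : Fin n → Step) (i : ℕ) : ℤ :=
  ∑ j : Fin n, if (j : ℕ) < i then (w j).val else 0

/-- A word is peakless if no up-step is immediately followed by a down-step. -/
def Peakless {n : ℕ} (w : Fin n → Step) : Prop :=
  ∀ i : ℕ, ∀ h : i + 1 < n,
    ¬(w ⟨i, Nat.lt_of_succ_lt h⟩ = Step.U ∧ w ⟨i + 1, h⟩ = Step.D)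

/-- `w` is a peakless Motzkin path from level `0` to level `k`:
all partial sums are nonnegative, the total sum is `k`, and there is no peak. -/
def IsPeaklessMotzkinTo {n : ℕ} (w : Fin n → Step) (k : ℤ) : Prop :=
  (∀ i : ℕ, 0 ≤ psum w i) ∧ psum w n = k ∧ Peakless w

/-- The height of a path: the maximum of its partial sums (0 for the empty path). -/
def height {n : ℕ} (w : Fin n → Step) : ℤ :=
  (Finset.range (n + 1)).sup' Finset.nonempty_range_add_one (psum w)

/-- `mTo n k`: the number of peakless Motzkin paths of length `n` from level `0` to level `k`. -/
noncomputable def mTo (n : ℕ) (k : ℤ) : ℕ :=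
  Nat.card {w : Fin n → Step // IsPeaklessMotzkinTo w k}

/-- `m n`: the number of peakless Motzkin paths of length `n`. -/
noncomputable def m (n : ℕ) : ℕ := mTo n 0

/-- `A n ℓ`: the number of peakless Motzkin paths of length `n` of height at most `ℓ`. -/
noncomputable def A (n ℓ : ℕ) : ℕ :=
  Nat.card {w : Fin n → Step // IsPeaklessMotzkinTo w 0 ∧ height w ≤ (ℓ : ℤ)}

namespace PfAux


open List

/-- Sum of step values of a list. -/
def sval (l : List Step) : ℤ := (l.map Step.val).sum

@[simp] lemma sval_nil : sval [] = 0 := rfl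
@[simp] lemma sval_cons (x : Step) (l : List Step) : sval (x :: l) = x.val + sval l := rfl
@[simp] lemma sval_append (a b : List Step) : sval (a ++ b) = sval a + sval b := by
  simp [sval]

/-- Nonnegative prefix sums. -/
def NN (l : List Step) : Prop := ∀ k : ℕ, 0 ≤ sval (l.take k)

def NoPk : Step → Step → Prop := fun a b => ¬(a = Step.U ∧ b = Step.D)

/-- Peakless Motzkin word, list version. -/
def PM (l : List Step) : Prop := NN l ∧ sval l = 0 ∧ l.Chain' NoPk

lemma PM_nil : PM [] := ⟨fun k => by simp, rfl, List.isChain_nil⟩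

lemma val_nonneg_of_ne_D {x : Step} (h : x ≠ Step.D) : 0 ≤ x.val := by
  cases x <;> simp_all [Step.val]

lemma eq_D_of_val_neg {x : Step} (h : x.val < 0) : x = Step.D := by
  cases x <;> simp_all [Step.val]

lemma head_ne_D {v : List Step} (hv : NN v) (hne : v ≠ []) :
    ∀ y ∈ v.head?, y ≠ Step.D := by
  intro y hy hD
  cases v with
  | nil => simp at hy
  | cons a l =>
    simp at hy; subst hy; subst hD
    have := hv 1
    simp [sval, Step.val] at this

lemma getLast_ne_U {v : List Step} (hv : NN v) (hs : sval v = 0) :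
    ∀ y ∈ v.getLast?, y ≠ Step.U := by
  intro y hy hU
  have hne : v ≠ [] := by rintro rfl; simp at hy
  have hdec : v.dropLast ++ [v.getLast hne] = v := List.dropLast_append_getLast hne
  have hyl : v.getLast hne = y := by
    have := List.getLast?_eq_getLast hne
    rw [this] at hy; exact Option.some_inj.mp hy
  have h1 : sval v.dropLast + y.val = 0 := by
    have := congrArg sval hdec
    simp [hyl] at this
    omega
  have h2 : 0 ≤ sval v.dropLast := by
    have := hv (v.length - 1)
    rwa [← List.dropLast_eq_take] at this
  subst hU
  simp [Step.val] at h1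
  omega

lemma sval_take_append (a b : List Step) (n : ℕ) :
    sval ((a ++ b).take n) = sval (a.take n) + sval (b.take (n - a.length)) := by
  rw [List.take_append, sval_append]

/-- PM is preserved by removing/adding a leading F. -/
lemma PM_cons_F (l : List Step) : PM (Step.F :: l) ↔ PM l := by
  constructor
  · rintro ⟨hnn, hs, hc⟩
    refine ⟨fun k => ?_, ?_, hc.tail⟩
    · have := hnn (k+1)
      simpa [Step.val] using this
    · simpa [Step.val] using hs
  · rintro ⟨hnn, hs, hc⟩
    refine ⟨fun k => ?_, by simpa [Step.val] using hs, ?_⟩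
    · cases k with
      | zero => simp
      | succ k => simpa [Step.val] using hnn k
    · rw [List.Chain', List.isChain_cons]
      exact ⟨fun y _ => fun h => by simp at h, hc⟩

/-- Construction: `U v D w` is PM when `v, w` are PM and `v` is nonempty. -/
lemma PM_UvDw {v w : List Step} (hv : PM v) (hw : PM w) (hne : v ≠ []) :
    PM (Step.U :: v ++ Step.D :: w) := by
  obtain ⟨hvn, hvs, hvc⟩ := hv
  obtain ⟨hwn, hws, hwc⟩ := hw
  refine ⟨?_, ?_, ?_⟩
  · intro k
    cases k with
    | zero => simp
    | succ k =>
      have h1 : sval ((Step.U :: v ++ Step.D :: w).take (k+1))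
          = 1 + sval ((v ++ Step.D :: w).take k) := by
        simp [Step.val]
      rw [h1, sval_take_append]
      have h2 : 0 ≤ sval (v.take k) := hvn k
      rcases Nat.lt_or_ge k v.length with h | h
      · have : k - v.length = 0 := by omega
        rw [this]; simp; omega
      · have h3 : sval ((Step.D :: w).take (k - v.length)) ≥ -1 := by
          cases hkv : k - v.length with
          | zero => simp
          | succ j =>
            have : sval ((Step.D :: w).take (j+1)) = -1 + sval (w.take j) := by
              simp [Step.val]
            rw [this]
            have := hwn j
            omega
        omega
  · simp [Step.val, hvs, hws]
  · have : Step.U :: v ++ Step.D :: w = (Step.U :: v) ++ (Step.D :: w) := by simp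
    rw [this, List.Chain', List.isChain_append]
    refine ⟨?_, ?_, ?_⟩
    · rw [List.isChain_cons]
      exact ⟨fun y hy => fun hp => head_ne_D hvn hne y hy hp.2, hvc⟩
    · rw [List.isChain_cons]
      exact ⟨fun y _ => fun hp => by exact absurd hp.1 (by simp), hwc⟩
    · intro x hx y hy
      have hy' : y = Step.D := by simpa using hy.symm
      have hlast : x ∈ v.getLast? := by
        rw [List.getLast?_eq_getLast (List.cons_ne_nil _ _), List.getLast_cons hne] at hx
        rw [List.getLast?_eq_getLast hne]
        exact hx
      intro hp
      exact getLast_ne_U hvn hvs x hlast hp.1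

lemma inj_aux_le {v₁ v₂ w₁ w₂ : List Step} (hn₂ : NN v₂)
    (hs₁ : sval v₁ = 0)
    (heq : v₁ ++ Step.D :: w₁ = v₂ ++ Step.D :: w₂)
    (hle : v₁.length ≤ v₂.length) : v₁ = v₂ ∧ w₁ = w₂ := by
  have hp₁ : v₁ <+: v₂ ++ Step.D :: w₂ := heq ▸ ⟨Step.D :: w₁, rfl⟩
  have hp₂ : v₂ <+: v₂ ++ Step.D :: w₂ := ⟨Step.D :: w₂, rfl⟩
  obtain ⟨t, ht⟩ := List.prefix_of_prefix_length_le hp₁ hp₂ hle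
  cases t with
  | nil =>
    simp at ht; subst ht
    have := List.append_cancel_left heq
    exact ⟨rfl, by simpa using this⟩
  | cons s t' =>
    exfalso
    have heq2 : v₁ ++ Step.D :: w₁ = v₁ ++ (s :: (t' ++ Step.D :: w₂)) := by
      rw [heq, ← ht]; simp
    have heq3 : Step.D :: w₁ = s :: (t' ++ Step.D :: w₂) :=
      List.append_cancel_left heq2
    have hs : s = Step.D := by
      simpa using (congrArg List.head? heq3).symm
    subst hs
    have hbad := hn₂ (v₁.length + 1)
    rw [← ht] at hbad
    have : (v₁ ++ Step.D :: t').take (v₁.length + 1) = v₁ ++ [Step.D] := by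
      rw [List.take_append]
      simp
    rw [this] at hbad
    simp [hs₁, Step.val] at hbad

lemma inj_aux {v₁ v₂ w₁ w₂ : List Step} (hn₁ : NN v₁) (hn₂ : NN v₂)
    (hs₁ : sval v₁ = 0) (hs₂ : sval v₂ = 0)
    (heq : v₁ ++ Step.D :: w₁ = v₂ ++ Step.D :: w₂) : v₁ = v₂ ∧ w₁ = w₂ := by
  rcases Nat.le_total v₁.length v₂.length with h | h
  · exact inj_aux_le hn₂ hs₁ heq h
  · obtain ⟨h1, h2⟩ := inj_aux_le hn₁ hs₂ heq.symm h
    exact ⟨h1.symm, h2.symm⟩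

/-- First-return decomposition of a PM path starting with U. -/
lemma decompose {t : List Step} (h : PM (Step.U :: t)) :
    ∃ v w, PM v ∧ PM w ∧ v ≠ [] ∧ t = v ++ Step.D :: w := by
  obtain ⟨hnn, hs, hc⟩ := h
  have hnn' : ∀ k : ℕ, -1 ≤ sval (t.take k) := by
    intro k
    have := hnn (k+1)
    simp [Step.val] at this
    omega
  have hst : sval t = -1 := by simp [Step.val] at hs; omega
  have hex : ∃ k, sval (t.take k) = -1 := ⟨t.length, by simpa using hst⟩
  classical
  set k := Nat.find hex with hk
  have hkspec : sval (t.take k) = -1 := Nat.find_spec hex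
  have hkmin : ∀ j, j < k → 0 ≤ sval (t.take j) := by
    intro j hj
    have := Nat.find_min hex hj
    have := hnn' j
    omega
  have hkle : k ≤ t.length := Nat.find_le (by simpa using hst)
  have hk1 : 1 ≤ k := by
    rcases Nat.eq_zero_or_pos k with h0 | h0
    · rw [h0] at hkspec; simp at hkspec
    · exact h0
  have hklt : k - 1 < t.length := by omega
  set v := t.take (k-1) with hv
  set d := t.get ⟨k-1, hklt⟩ with hd
  set w := t.drop k with hw
  have htdec : t = v ++ d :: w := by
    have h2 : t.drop (k-1) = d :: t.drop (k-1+1) := List.drop_eq_getElem_cons hklt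
    have h3 : k - 1 + 1 = k := by omega
    rw [h3] at h2
    rw [hv, hw, ← h2]
    exact (List.take_append_drop _ t).symm
  have htake_k : t.take k = v ++ [d] := by
    have : k = (k-1) + 1 := by omega
    rw [this, List.take_succ, List.getElem?_eq_getElem hklt]
    rfl
  have hsv : 0 ≤ sval v := hkmin (k-1) (by omega)
  have hsvd : sval v + d.val = -1 := by
    have := hkspec
    rw [htake_k, sval_append, sval_cons, sval_nil] at this
    omega
  have hdD : d = Step.D := by
    apply eq_D_of_val_neg; omega
  have hsv0 : sval v = 0 := by
    rw [hdD] at hsvd; simp [Step.val] at hsvd; omega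
  have hvnn : NN v := by
    intro j
    rw [hv, List.take_take]
    exact hkmin _ (by omega)
  have hwnn : NN w := by
    intro j
    have h2 : t.take (k + j) = t.take k ++ w.take j := by
      rw [List.take_add]
    have h3 := hnn' (k+j)
    rw [h2, sval_append, hkspec] at h3
    omega
  have hws : sval w = 0 := by
    have := congrArg sval htdec
    rw [hst, sval_append, sval_cons, hsv0, hdD] at this
    simp [Step.val] at this
    omega
  have hcv : v.Chain' NoPk ∧ w.Chain' NoPk := by
    have hc2 : ((Step.U :: v) ++ (Step.D :: w)).Chain' NoPk := by
      have : (Step.U :: v) ++ (Step.D :: w) = Step.U :: t := by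
        rw [htdec, hdD]; simp
      rw [this]; exact hc
    rw [List.Chain', List.isChain_append] at hc2
    exact ⟨hc2.1.tail, hc2.2.1.tail⟩
  have hvne : v ≠ [] := by
    intro hveq
    have : t = Step.D :: w := by rw [htdec, hveq, hdD]; simp
    rw [this] at hc
    rw [List.Chain', List.isChain_cons_cons] at hc
    exact hc.1 ⟨rfl, rfl⟩
  exact ⟨v, w, ⟨hvnn, hsv0, hcv.1⟩, ⟨hwnn, hws, hcv.2⟩, hvne, by rw [htdec, hdD]⟩

lemma psum_eq_sval {n : ℕ} (w : Fin n → Step) (i : ℕ) :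
    psum w i = sval ((List.ofFn w).take i) := by
  induction i with
  | zero => simp [psum]
  | succ i ih =>
    have hstep : psum w (i+1) = psum w i + (if h : i < n then (w ⟨i, h⟩).val else 0) := by
      unfold psum
      have hsplit : ∀ j : Fin n, (if (j : ℕ) < i + 1 then (w j).val else 0)
          = (if (j : ℕ) < i then (w j).val else 0) + (if (j : ℕ) = i then (w j).val else 0) := by
        intro j
        by_cases h1 : (j : ℕ) < i
        · have h2 : (j : ℕ) < i + 1 := by omega
          have h3 : ¬((j : ℕ) = i) := by omega
          simp [h1, h2, h3]
        · by_cases h4 : (j : ℕ) = i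
          · have h2 : (j : ℕ) < i + 1 := by omega
            simp [h1, h2, h4]
          · have h2 : ¬((j : ℕ) < i + 1) := by omega
            simp [h1, h2, h4]
      rw [Finset.sum_congr rfl (fun j _ => hsplit j), Finset.sum_add_distrib]
      congr 1
      by_cases h : i < n
      · have : ∀ j : Fin n, (if (j : ℕ) = i then (w j).val else 0)
            = (if j = (⟨i, h⟩ : Fin n) then (w j).val else 0) := by
          intro j; congr 1; simp [Fin.ext_iff]
        rw [Finset.sum_congr rfl (fun j _ => this j), Finset.sum_ite_eq']
        simp [h]
      · have : ∀ j : Fin n, (if (j : ℕ) = i then (w j).val else 0) = 0 := by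
          intro j
          have : ¬((j : ℕ) = i) := by have := j.2; omega
          simp [this]
        rw [Finset.sum_congr rfl (fun j _ => this j)]
        simp [h]
    rw [hstep, ih, List.take_succ]
    by_cases h : i < n
    · have hlt : i < (List.ofFn w).length := by simpa using h
      rw [List.getElem?_eq_getElem hlt]
      simp only [Option.toList_some, sval_append, sval_cons, sval_nil, dif_pos h]
      have hoe : (List.ofFn w)[i]'hlt = w ⟨i, h⟩ := by simp
      rw [hoe]; ring
    · rw [List.getElem?_eq_none (by simpa using h)]
      simp [h]

lemma peakless_iff_chain {n : ℕ} (w : Fin n → Step) :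
    Peakless w ↔ (List.ofFn w).Chain' NoPk := by
  rw [List.Chain', List.isChain_iff_getElem]
  constructor
  · intro hp i h
    have hlen : (List.ofFn w).length = n := List.length_ofFn (f := w)
    have h' : i + 1 < n := by omega
    rintro ⟨h1, h2⟩
    refine hp i h' ⟨?_, ?_⟩
    · rw [← h1, List.getElem_ofFn]
    · rw [← h2, List.getElem_ofFn]
  · intro hc i h'
    have hlen : (List.ofFn w).length = n := List.length_ofFn (f := w)
    have h : i + 1 < (List.ofFn w).length := by omega
    rintro ⟨h1, h2⟩
    refine hc i h ⟨?_, ?_⟩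
    · rw [List.getElem_ofFn, ← h1]
    · rw [List.getElem_ofFn, ← h2]

lemma isPM_iff {n : ℕ} (w : Fin n → Step) :
    IsPeaklessMotzkinTo w 0 ↔ PM (List.ofFn w) := by
  unfold IsPeaklessMotzkinTo PM NN
  rw [peakless_iff_chain]
  constructor
  · rintro ⟨h1, h2, h3⟩
    refine ⟨fun k => by rw [← psum_eq_sval]; exact h1 k, ?_, h3⟩
    have := h2
    rwa [psum_eq_sval, List.take_of_length_le (by simp)] at this
  · rintro ⟨h1, h2, h3⟩
    refine ⟨fun k => by rw [psum_eq_sval]; exact h1 k, ?_, h3⟩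
    rw [psum_eq_sval, List.take_of_length_le (by simp)]
    exact h2

def listEquiv (n : ℕ) :
    {w : Fin n → Step // IsPeaklessMotzkinTo w 0} ≃ {l : List Step // PM l ∧ l.length = n} where
  toFun x := ⟨List.ofFn x.1, (isPM_iff x.1).mp x.2, List.length_ofFn (f := x.1)⟩
  invFun x := by
    refine ⟨fun i => x.1.get ⟨i.1, by rw [x.2.2]; exact i.2⟩, ?_⟩
    have hofn : List.ofFn (fun i : Fin n => x.1.get ⟨i.1, by rw [x.2.2]; exact i.2⟩) = x.1 := by
      apply List.ext_get (by simp [x.2.2])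
      intro j h1 h2
      simp
    rw [isPM_iff, hofn]
    exact x.2.1
  left_inv x := by
    ext i
    simp [List.get_ofFn]
  right_inv x := by
    ext1
    apply List.ext_get (by simp [x.2.2])
    intro j h1 h2
    simp


lemma m_eq (n : ℕ) : m n = Nat.card {l : List Step // PM l ∧ l.length = n} := by
  unfold m mTo; exact Nat.card_congr (listEquiv n)

instance finPMlen (n : ℕ) : Finite {l : List Step // PM l ∧ l.length = n} :=
  Finite.of_equiv _ (listEquiv n)

noncomputable def ne' (i : ℕ) : ℕ := Nat.card {v : List Step // PM v ∧ v ≠ [] ∧ v.length = i}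

instance finPMne (n : ℕ) : Finite {l : List Step // PM l ∧ l ≠ [] ∧ l.length = n} :=
  Finite.of_injective
    (fun x => (⟨x.1, x.2.1, x.2.2.2⟩ : {l : List Step // PM l ∧ l.length = n}))
    (by rintro ⟨a, _⟩ ⟨b, _⟩ h; simpa [Subtype.ext_iff] using h)

lemma ne'_zero : ne' 0 = 0 := by
  have : IsEmpty {v : List Step // PM v ∧ v ≠ [] ∧ v.length = 0} :=
    ⟨fun x => x.2.2.1 (List.eq_nil_of_length_eq_zero x.2.2.2)⟩
  exact Nat.card_of_isEmpty

lemma ne'_succ (i : ℕ) : ne' (i+1) = m (i+1) := by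
  rw [m_eq]
  apply Nat.card_congr
  apply Equiv.subtypeEquivRight
  intro l
  constructor
  · rintro ⟨h1, _, h3⟩; exact ⟨h1, h3⟩
  · rintro ⟨h1, h3⟩
    exact ⟨h1, by rintro rfl; simp at h3, h3⟩

lemma m_zero : m 0 = 1 := by
  rw [m_eq]
  have : Unique {l : List Step // PM l ∧ l.length = 0} := by
    refine ⟨⟨⟨[], PM_nil, rfl⟩⟩, ?_⟩
    rintro ⟨l, h1, h2⟩
    have : l = [] := List.eq_nil_of_length_eq_zero h2
    subst this; rfl
  exact Nat.card_unique

lemma m_one : m 1 = 1 := by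
  rw [m_eq]
  have : Unique {l : List Step // PM l ∧ l.length = 1} := by
    refine ⟨⟨⟨[Step.F], (PM_cons_F []).mpr PM_nil, rfl⟩⟩, ?_⟩
    rintro ⟨l, h1, h2⟩
    obtain ⟨a, rfl⟩ := List.length_eq_one_iff.mp h2
    have hs : a.val = 0 := by
      have := h1.2.1; simpa using this
    have : a = Step.F := by cases a <;> simp_all [Step.val]
    subst this; rfl
  exact Nat.card_unique

lemma card_F (n : ℕ) :
    Nat.card {l : List Step // PM l ∧ l.length = n + 1 ∧ l.head? = some Step.F} = m n := by
  rw [m_eq]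
  symm
  apply Nat.card_congr
  refine Equiv.ofBijective
    (fun x => ⟨Step.F :: x.1, (PM_cons_F x.1).mpr x.2.1, by simp [x.2.2], rfl⟩) ⟨?_, ?_⟩
  · rintro ⟨a, _⟩ ⟨b, _⟩ h
    simp only [Subtype.mk.injEq, List.cons.injEq, true_and] at h
    exact Subtype.ext h
  · rintro ⟨l, h1, h2, h3⟩
    cases l with
    | nil => simp at h3
    | cons a t =>
      have ha : a = Step.F := by simpa using h3
      subst ha
      refine ⟨⟨t, (PM_cons_F t).mp h1, by simpa using h2⟩, rfl⟩

lemma nat_card_sigma {k : ℕ} (f : Fin k → Type*) [∀ i, Finite (f i)] :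
    Nat.card ((i : Fin k) × f i) = ∑ i : Fin k, Nat.card (f i) := by
  classical
  letI : ∀ i, Fintype (f i) := fun i => Fintype.ofFinite _
  simp_rw [Nat.card_eq_fintype_card]
  exact Fintype.card_sigma


lemma card_U (n : ℕ) :
    Nat.card {l : List Step // PM l ∧ l.length = n + 2 ∧ l.head? = some Step.U}
      = ∑ i ∈ Finset.range (n + 1), ne' i * m (n - i) := by
  classical
  have hlen' : ∀ (i : Fin (n+1)) (v w : List Step), v.length = (i : ℕ) →
      w.length = n - (i : ℕ) → (Step.U :: v ++ Step.D :: w).length = n + 2 := by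
    intro i v w hv hw
    have := i.2
    simp only [List.length_cons, List.length_append, hv, hw]
    omega
  have key : Nat.card ((i : Fin (n+1)) ×
      ({v : List Step // PM v ∧ v ≠ [] ∧ v.length = (i : ℕ)}
        × {w : List Step // PM w ∧ w.length = n - (i : ℕ)}))
      = Nat.card {l : List Step // PM l ∧ l.length = n + 2 ∧ l.head? = some Step.U} := by
    apply Nat.card_congr
    refine Equiv.ofBijective (fun x =>
      ⟨Step.U :: x.2.1.1 ++ Step.D :: x.2.2.1,
        PM_UvDw x.2.1.2.1 x.2.2.2.1 x.2.1.2.2.1,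
        hlen' x.1 x.2.1.1 x.2.2.1 x.2.1.2.2.2 x.2.2.2.2, rfl⟩) ⟨?_, ?_⟩
    · rintro ⟨i₁, ⟨v₁, hv₁⟩, ⟨w₁, hw₁⟩⟩ ⟨i₂, ⟨v₂, hv₂⟩, ⟨w₂, hw₂⟩⟩ h
      simp only [Subtype.mk.injEq, List.cons_append, List.cons.injEq, true_and] at h
      obtain ⟨hv, hw⟩ := inj_aux hv₁.1.1 hv₂.1.1 hv₁.1.2.1 hv₂.1.2.1 h
      have hi : i₁ = i₂ := Fin.ext (by rw [← hv₁.2.2, ← hv₂.2.2, hv])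
      subst hi; subst hv; subst hw; rfl
    · rintro ⟨l, h1, h2, h3⟩
      cases l with
      | nil => simp at h3
      | cons a t =>
        have ha : a = Step.U := by simpa using h3
        subst ha
        obtain ⟨v, w, hv, hw, hne, hteq⟩ := decompose h1
        have hlen : v.length + w.length = n := by
          have h4 := congrArg List.length hteq
          simp only [List.length_append, List.length_cons] at h4
          simp only [List.length_cons] at h2
          omega
        refine ⟨⟨⟨v.length, by omega⟩, ⟨v, hv, hne, rfl⟩, ⟨w, hw, by simp; omega⟩⟩, ?_⟩
        simp only [Subtype.mk.injEq, List.cons_append]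
        rw [hteq]
  rw [← key, nat_card_sigma]
  have hterm : ∀ i : Fin (n+1),
      Nat.card ({v : List Step // PM v ∧ v ≠ [] ∧ v.length = (i : ℕ)}
        × {w : List Step // PM w ∧ w.length = n - (i : ℕ)}) = ne' (i : ℕ) * m (n - (i : ℕ)) := by
    intro i
    rw [Nat.card_prod, m_eq]
    rfl
  rw [Finset.sum_congr rfl (fun i _ => hterm i)]
  exact Fin.sum_univ_eq_sum_range (fun i => ne' i * m (n - i)) (n + 1)

instance finPMhead (n : ℕ) (s : Step) :
    Finite {l : List Step // PM l ∧ l.length = n ∧ l.head? = some s} :=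
  Finite.of_injective
    (fun x => (⟨x.1, x.2.1, x.2.2.1⟩ : {l : List Step // PM l ∧ l.length = n}))
    (by rintro ⟨a, _⟩ ⟨b, _⟩ h; simpa [Subtype.ext_iff] using h)

lemma m_split (n : ℕ) :
    m (n + 2) = Nat.card {l : List Step // PM l ∧ l.length = n + 2 ∧ l.head? = some Step.F}
      + Nat.card {l : List Step // PM l ∧ l.length = n + 2 ∧ l.head? = some Step.U} := by
  classical
  rw [m_eq, ← Nat.card_sum]
  apply Nat.card_congr
  have hiff : ∀ l : List Step, (PM l ∧ l.length = n + 2) ↔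
      ((PM l ∧ l.length = n + 2 ∧ l.head? = some Step.F)
        ∨ (PM l ∧ l.length = n + 2 ∧ l.head? = some Step.U)) := by
    intro l
    constructor
    · rintro ⟨h1, h2⟩
      cases l with
      | nil => simp at h2
      | cons a t =>
        have ha : a ≠ Step.D := by
          intro hD
          have := h1.1 1
          subst hD
          simp [Step.val] at this
        cases a with
        | U => right; exact ⟨h1, h2, rfl⟩
        | D => exact absurd rfl ha
        | F => left; exact ⟨h1, h2, rfl⟩
    · rintro (⟨h1, h2, _⟩ | ⟨h1, h2, _⟩) <;> exact ⟨h1, h2⟩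
  refine (Equiv.subtypeEquivRight hiff).trans (subtypeOrEquiv _ _ ?_)
  intro p hp hq l hl
  have h1 := (hp l hl).2.2
  have h2 := (hq l hl).2.2
  rw [h1] at h2
  simp at h2

lemma m_rec (n : ℕ) :
    m (n + 2) = m (n + 1) + ∑ i ∈ Finset.range (n + 1), ne' i * m (n - i) := by
  rw [m_split, card_F, card_U]

lemma Ms_eq : (PowerSeries.mk fun n => (m n : ℚ))
    = 1 + PowerSeries.X * (PowerSeries.mk fun n => (m n : ℚ))
      + PowerSeries.X ^ 2 * (((PowerSeries.mk fun n => (m n : ℚ)) - 1)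
          * (PowerSeries.mk fun n => (m n : ℚ))) := by
  set G := PowerSeries.mk fun n => (m n : ℚ) with hG
  ext n
  rw [map_add, map_add]
  have hcoef : ∀ k, (PowerSeries.coeff k) G = (m k : ℚ) := fun k => by
    rw [hG, PowerSeries.coeff_mk]
  rcases n with _ | n
  · rw [hcoef]
    simp [m_zero]
  rcases n with _ | n
  · rw [hcoef, PowerSeries.coeff_succ_X_mul, hcoef]
    have h2 : (PowerSeries.coeff 1) (PowerSeries.X ^ 2 * ((G - 1) * G)) = 0 := by
      rw [pow_two, mul_assoc, PowerSeries.coeff_succ_X_mul]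
      simp
    rw [h2]
    simp [m_zero, m_one, PowerSeries.coeff_one]
  · rw [hcoef, PowerSeries.coeff_succ_X_mul, hcoef]
    have h2 : (PowerSeries.coeff (n + 2)) (PowerSeries.X ^ 2 * ((G - 1) * G))
        = (PowerSeries.coeff n) ((G - 1) * G) := PowerSeries.coeff_X_pow_mul _ 2 n
    rw [h2, PowerSeries.coeff_mul]
    have h3 : ∀ p : ℕ × ℕ, p ∈ Finset.HasAntidiagonal.antidiagonal n →
        (PowerSeries.coeff p.1) (G - 1) * (PowerSeries.coeff p.2) G
          = (ne' p.1 : ℚ) * (m p.2 : ℚ) := by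
      intro p _
      rw [map_sub, hcoef, hcoef, PowerSeries.coeff_one]
      congr 1
      cases hp : p.1 with
      | zero => simp [ne'_zero, m_zero]
      | succ i => simp [ne'_succ]
    rw [Finset.sum_congr rfl h3, Finset.Nat.sum_antidiagonal_eq_sum_range_succ_mk]
    have h4 : (PowerSeries.coeff (n+2)) (1 : PowerSeries ℚ) = 0 := by
      rw [PowerSeries.coeff_one]; simp
    rw [h4, m_rec n]
    push_cast
    ring

end PfAux

/-- Writing `M = 1 + z·C` for the generating function `M = ∑ m(n) zⁿ` of peakless Motzkin
paths, the series `C` satisfies `C·((1 − z)·(1 − z³·C) − z) = 1 − z − z³·C` in `ℚ⟦z⟧`,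
which encodes the periodic continued fraction
`M = 1 + z/(1 − z/(1 − z/(1 − z³/(1 − z/(1 − z/(1 − z³/(1 − ⋯)))))))`. -/
theorem peakless_gf_periodic_continued_fraction (C : PowerSeries ℚ)
    (hC : (PowerSeries.mk fun n => (m n : ℚ)) = 1 + PowerSeries.X * C) :
    C * ((1 - PowerSeries.X) * (1 - PowerSeries.X ^ 3 * C) - PowerSeries.X)
      = 1 - PowerSeries.X - PowerSeries.X ^ 3 * C := by
  have hM := PfAux.Ms_eq
  rw [hC] at hM
  have hX : (PowerSeries.X : PowerSeries ℚ) ≠ 0 := PowerSeries.X_ne_zero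
  have h2 : C = 1 + PowerSeries.X * C + PowerSeries.X ^ 2 * C
      + PowerSeries.X ^ 3 * (C * C) := by
    have h1 : PowerSeries.X * C = PowerSeries.X * (1 + PowerSeries.X * C
        + PowerSeries.X ^ 2 * C + PowerSeries.X ^ 3 * (C * C)) := by
      linear_combination hM
    exact mul_left_cancel₀ hX h1
  linear_combination (1 - PowerSeries.X) * h2
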